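/- Let h : ℝⁿ → ℝ be continuously differentiable, let α : ℝ → ℝ be an extended class K function, and let x : [0, ∞) → ℝⁿ be a differentiable curve solving ẋ(t) = f(x(t)) + g(x(t))·u(t), where f : ℝⁿ → ℝⁿ, g : ℝⁿ → ℝⁿˣᵐ and u : [0, ∞) → ℝᵐ. If h(x(0)) ≥ 0 and for every t ≥ 0 the control barrier inequality ⟨∇h(x(t)), f(x(t)) + g(x(t))·u(t)⟩ + α(h(x(t))) ≥ 0 holds, then h(x(t)) ≥ 0 for all t ≥ 0; that is, the trajectory remains in the safe set C = {x ∈ ℝⁿ : h(x) ≥ 0}. -/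

import Mathlib

open Real

/-- Forward invariance of the safe set `C = {x | h x ≥ 0}` under the Control
Barrier Function condition: if `h` is continuously differentiable, `α` is an
extended class `K` function, `x` solves `ẋ = f(x) + g(x) u` on `[0, ∞)`,
`h (x 0) ≥ 0`, and the CBF inequality
`⟪∇h(x t), f(x t) + g(x t) • u t⟫ + α (h (x t)) ≥ 0` holds for all `t ≥ 0`,
then `h (x t) ≥ 0` for all `t ≥ 0`. -/
theorem cbf_forward_invariance
    (n m : ℕ)
    (h : EuclideanSpace ℝ (Fin n) → ℝ)
    (hh : ContDiff ℝ 1 h)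
    (α : ℝ → ℝ) (hα_mono : StrictMono α) (hα_zero : α 0 = 0)
    (f : EuclideanSpace ℝ (Fin n) → EuclideanSpace ℝ (Fin n))
    (g : EuclideanSpace ℝ (Fin n) → Matrix (Fin n) (Fin m) ℝ)
    (u : ℝ → (Fin m → ℝ))
    (x : ℝ → EuclideanSpace ℝ (Fin n))
    (hsol : ∀ t ∈ Set.Ici (0 : ℝ),
      HasDerivWithinAt x
        (f (x t) + (WithLp.equiv 2 (Fin n → ℝ)).symm ((g (x t)).mulVec (u t)))
        (Set.Ici 0) t)
    (h0 : 0 ≤ h (x 0))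
    (hcbf : ∀ t ≥ (0 : ℝ),
      0 ≤ inner ℝ (gradient h (x t))
            (f (x t) + (WithLp.equiv 2 (Fin n → ℝ)).symm ((g (x t)).mulVec (u t)))
          + α (h (x t))) :
    ∀ t ≥ (0 : ℝ), x t ∈ {y : EuclideanSpace ℝ (Fin n) | 0 ≤ h y} := by
  set φ : ℝ → ℝ := fun t => h (x t) with hφdef
  set v : ℝ → EuclideanSpace ℝ (Fin n) := fun t =>
    f (x t) + (WithLp.equiv 2 (Fin n → ℝ)).symm ((g (x t)).mulVec (u t)) with hvdef
  have hφ : ∀ t ∈ Set.Ici (0:ℝ),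
      HasDerivWithinAt φ (inner ℝ (gradient h (x t)) (v t)) (Set.Ici 0) t := by
    intro t ht
    have hd : DifferentiableAt ℝ h (x t) := (hh.differentiable one_ne_zero) (x t)
    have hg := hd.hasGradientAt
    have hf := hg.hasFDerivAt
    have := hf.comp_hasDerivWithinAt t (hsol t ht)
    simpa [InnerProductSpace.toDual_apply_apply, hvdef, hφdef, Function.comp_def] using this
  have hφcont : ContinuousOn φ (Set.Ici 0) := fun t ht =>
    (hφ t ht).continuousWithinAt
  intro t1 ht1
  by_contra hneg
  simp only [Set.mem_setOf_eq, not_le] at hneg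
  -- φ t1 < 0, t1 > 0
  have ht1pos : 0 < t1 := by
    rcases lt_or_eq_of_le ht1 with h' | h'
    · exact h'
    · exfalso; rw [← h'] at hneg; exact absurd h0 (not_le.mpr hneg)
  set S : Set ℝ := {t | t ∈ Set.Icc 0 t1 ∧ 0 ≤ φ t} with hS
  have hSne : S.Nonempty := ⟨0, ⟨le_refl 0, le_of_lt ht1pos⟩, h0⟩
  have hSbdd : BddAbove S := ⟨t1, fun t ht => ht.1.2⟩
  set s := sSup S with hs
  have hsmem' : ∀ t ∈ S, t ≤ t1 := fun t ht => ht.1.2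
  have hs_le : s ≤ t1 := csSup_le hSne hsmem'
  have hs_ge : 0 ≤ s := le_csSup hSbdd ⟨⟨le_refl 0, le_of_lt ht1pos⟩, h0⟩
  -- φ s ≥ 0 by continuity
  have hφs : 0 ≤ φ s := by
    have hclosed : IsClosed S := by
      have : S = Set.Icc 0 t1 ∩ φ ⁻¹' Set.Ici 0 := by
        ext t; simp [hS, Set.mem_Icc, Set.mem_Ici, and_assoc]
      rw [this]
      exact (hφcont.mono (fun t ht => ht.1)).preimage_isClosed_of_isClosed
        isClosed_Icc isClosed_Ici
    exact (hclosed.csSup_mem hSne hSbdd).2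
  have hs_lt : s < t1 := by
    rcases lt_or_eq_of_le hs_le with h' | h'
    · exact h'
    · exfalso; rw [h'] at hφs; exact absurd hφs (not_le.mpr hneg)
  -- on (s, t1], φ < 0
  have hφneg : ∀ t, s < t → t ≤ t1 → φ t < 0 := by
    intro t hst htt1
    by_contra hge
    push_neg at hge
    have : t ∈ S := ⟨⟨le_trans hs_ge (le_of_lt hst), htt1⟩, hge⟩
    exact absurd (le_csSup hSbdd this) (not_le.mpr hst)
  -- deriv positive on interior
  have hmono : StrictMonoOn φ (Set.Icc s t1) := by
    apply strictMonoOn_of_deriv_pos (convex_Icc s t1)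
    · exact hφcont.mono (Set.Icc_subset_Ici_self.trans (by
        intro t ht; exact le_trans hs_ge ht))
    · intro t ht
      rw [interior_Icc] at ht
      have ht0 : (0:ℝ) < t := lt_of_le_of_lt hs_ge ht.1
      have hda : HasDerivAt φ (inner ℝ (gradient h (x t)) (v t)) t :=
        (hφ t (le_of_lt ht0)).hasDerivAt (Ici_mem_nhds ht0)
      rw [hda.deriv]
      have h1 := hcbf t (le_of_lt ht0)
      have h2 : α (φ t) < 0 := by
        rw [← hα_zero]
        exact hα_mono (hφneg t ht.1 (le_of_lt ht.2))
      linarith [h1]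
  have := hmono ⟨le_refl s, le_of_lt hs_lt⟩ ⟨le_of_lt hs_lt, le_refl t1⟩ hs_lt
  linarith
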